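/- Let (g₁, g₂) be a normal pair. Then Spol(g₁, g₂) ≠ 0 and S(Spol(g₁, g₂)) = max(S(u₁ g₁), S(u₂ g₂)); moreover, if S(u₁ g₁) > S(u₂ g₂) then LT(u₁) ≠ 1, and in all cases S(Spol(g₁, g₂)) > max(S(g₁), S(g₂)). -/

import Mathlib

open MvPolynomial

namespace F5

noncomputable section
open scoped Classical

/-- Monomials (power products) in `n` variables, represented by exponent vectors. -/
abbrev Mon (n : ℕ) : Type := Fin n →₀ ℕ

/-- Module terms `t·eₗ` of the free module `Pᵐ`. -/
abbrev MTerm (n m : ℕ) : Type := (Fin n →₀ ℕ) × Fin m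

/-- Action of a monomial on a module term: `u • (t eₗ) = (u t) eₗ`. -/
def mact {n m : ℕ} (u : Mon n) (σ : MTerm n m) : MTerm n m := (u + σ.1, σ.2)

/-- An admissible order on monomials: a linear order with `1 ≤ t` and
compatibility with multiplication. -/
structure AdmissibleOrder (n : ℕ) where
  ord : LinearOrder (Mon n)
  one_le : ∀ t : Mon n, ord.le 0 t
  mul_lt_mul : ∀ s t u : Mon n, ord.lt s t → ord.lt (u + s) (u + t)

/-- An admissible module order on module terms: a linear well-order compatible
with the monomial action, and such that `σ ≤ u σ`. -/
structure ModuleOrder (n m : ℕ) where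
  ord : LinearOrder (MTerm n m)
  wf : WellFounded ord.lt
  mul_lt_mul : ∀ (σ τ : MTerm n m) (u : Mon n), ord.lt σ τ → ord.lt (mact u σ) (mact u τ)
  le_mul : ∀ (σ : MTerm n m) (u : Mon n), ord.le σ (mact u σ)

variable {k : Type*} [Field k] {n m : ℕ}

/-- The leading monomial of a polynomial with respect to `μ` (junk value `0` for `f = 0`). -/
noncomputable def pLT (μ : AdmissibleOrder n) (f : MvPolynomial (Fin n) k) : Mon n :=
  if h : f.support.Nonempty then @Finset.max' _ μ.ord f.support h else 0

/-- The leading coefficient of a polynomial with respect to `μ`. -/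
noncomputable def pLC (μ : AdmissibleOrder n) (f : MvPolynomial (Fin n) k) : k :=
  f.coeff (pLT μ f)

/-- The set (finset) of module terms occurring in an element of `Pᵐ`. -/
noncomputable def msupport (u : Fin m → MvPolynomial (Fin n) k) : Finset (MTerm n m) :=
  letI := Classical.decEq (MTerm n m)
  Finset.univ.biUnion fun l => (u l).support.image fun t => (t, l)

/-- A junk default module term (needs `m ≠ 0`). -/
def mdefault [NeZero m] : MTerm n m := (0, ⟨0, Nat.pos_of_ne_zero (NeZero.ne m)⟩)

/-- The leading module term of a nonzero element of `Pᵐ` with respect to `μ'`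
(junk value for `0`). -/
noncomputable def mLT [NeZero m] (μ' : ModuleOrder n m) (u : Fin m → MvPolynomial (Fin n) k) :
    MTerm n m :=
  if h : (msupport u).Nonempty then @Finset.max' _ μ'.ord _ h else mdefault

/-- The map `v : Pᵐ → P`, `v(eᵢ) = fᵢ`. -/
noncomputable def vmap (F : Fin m → MvPolynomial (Fin n) k)
    (u : Fin m → MvPolynomial (Fin n) k) : MvPolynomial (Fin n) k :=
  ∑ i, u i * F i

/-- The ideal `I = (f₁, …, fₘ)`. -/
noncomputable def idealI (F : Fin m → MvPolynomial (Fin n) k) : Ideal (MvPolynomial (Fin n) k) :=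
  Ideal.span (Set.range F)

/-- `LT(Syz F)`: leading module terms of nonzero syzygies of `F`. -/
def LTSyz [NeZero m] (μ' : ModuleOrder n m) (F : Fin m → MvPolynomial (Fin n) k) :
    Set (MTerm n m) :=
  {σ | ∃ s : Fin m → MvPolynomial (Fin n) k, s ≠ 0 ∧ vmap F s = 0 ∧ mLT μ' s = σ}

/-- The signature `S(f)`: the `μ'`-minimum of `{LT(u) : v(u) = f}` (junk for `f = 0` or
`f ∉ I`). -/
noncomputable def sig [NeZero m] (μ' : ModuleOrder n m) (F : Fin m → MvPolynomial (Fin n) k)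
    (f : MvPolynomial (Fin n) k) : MTerm n m :=
  if hne : {σ : MTerm n m |
      ∃ u : Fin m → MvPolynomial (Fin n) k, u ≠ 0 ∧ vmap F u = f ∧ mLT μ' u = σ}.Nonempty
  then μ'.wf.min _ hne else mdefault

/-- `f` S-reduces to `g` with `h`, with respect to `σ`. -/
noncomputable def SReduces [NeZero m] (μ : AdmissibleOrder n) (μ' : ModuleOrder n m)
    (F : Fin m → MvPolynomial (Fin n) k)
    (f h g : MvPolynomial (Fin n) k) (σ : MTerm n m) : Prop :=
  ∃ (t : Mon n) (α : k), α ≠ 0 ∧ g = f - (monomial t α) * h ∧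
    (g = 0 ∨ μ.ord.lt (pLT μ g) (pLT μ f)) ∧
    μ'.ord.lt (sig μ' F ((monomial t (1 : k)) * h)) σ

/-- `f` is S-irreducible with respect to `σ`. -/
noncomputable def SIrr [NeZero m] (μ : AdmissibleOrder n) (μ' : ModuleOrder n m)
    (F : Fin m → MvPolynomial (Fin n) k) (f : MvPolynomial (Fin n) k) (σ : MTerm n m) : Prop :=
  f = 0 ∨ ¬ ∃ h : MvPolynomial (Fin n) k, h ∈ idealI F ∧ h ≠ 0 ∧
    ∃ g : MvPolynomial (Fin n) k, SReduces μ μ' F f h g σ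

/-- `G` is an S-Gröbner basis (of `I` w.r.t. `μ`, `F`, `μ'`). -/
noncomputable def IsSGB [NeZero m] (μ : AdmissibleOrder n) (μ' : ModuleOrder n m)
    (F : Fin m → MvPolynomial (Fin n) k) (G : Set (MvPolynomial (Fin n) k)) : Prop :=
  (∀ g ∈ G, g ∈ idealI F ∧ g ≠ 0) ∧
  ∀ f : MvPolynomial (Fin n) k, f ∈ idealI F → f ≠ 0 → SIrr μ μ' F f (sig μ' F f) →
    ∃ g ∈ G, ∃ t : Mon n,
      pLT μ ((monomial t (1 : k)) * g) = pLT μ f ∧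
      sig μ' F ((monomial t (1 : k)) * g) = sig μ' F f

/-- `LT(I)`: the set of leading monomials of nonzero elements of `I`. -/
def LTIdeal (μ : AdmissibleOrder n) (F : Fin m → MvPolynomial (Fin n) k) : Set (Mon n) :=
  {t | ∃ f : MvPolynomial (Fin n) k, f ∈ idealI F ∧ f ≠ 0 ∧ pLT μ f = t}

/-- `φ(t)`: the `μ'`-minimum signature of nonzero elements of `I` with leading monomial `t`. -/
noncomputable def phi [NeZero m] (μ : AdmissibleOrder n) (μ' : ModuleOrder n m)
    (F : Fin m → MvPolynomial (Fin n) k) (t : Mon n) : MTerm n m :=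
  if hne : {σ : MTerm n m | ∃ f : MvPolynomial (Fin n) k,
      f ∈ idealI F ∧ f ≠ 0 ∧ pLT μ f = t ∧ sig μ' F f = σ}.Nonempty
  then μ'.wf.min _ hne else mdefault

/-- `f` is a primitive S-irreducible polynomial. -/
noncomputable def PrimSIrr [NeZero m] (μ : AdmissibleOrder n) (μ' : ModuleOrder n m)
    (F : Fin m → MvPolynomial (Fin n) k) (f : MvPolynomial (Fin n) k) : Prop :=
  f ∈ idealI F ∧ f ≠ 0 ∧ SIrr μ μ' F f (sig μ' F f) ∧
  ¬ ∃ (f' : MvPolynomial (Fin n) k) (t : Mon n),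
      f' ∈ idealI F ∧ f' ≠ 0 ∧ t ≠ 0 ∧ SIrr μ μ' F f' (sig μ' F f') ∧
      pLT μ ((monomial t (1 : k)) * f') = pLT μ f ∧
      sig μ' F ((monomial t (1 : k)) * f') = sig μ' F f

/-- The lcm of two monomials (pointwise maximum of exponents). -/
def lcmMon {n : ℕ} (s t : Mon n) : Mon n := t + (s - t)

/-- The term `u₁ = lcm(LT g₁, LT g₂)/(LC g₁ · LT g₁)` (when the first argument is `g₁`). -/
noncomputable def uterm (μ : AdmissibleOrder n) (g₁ g₂ : MvPolynomial (Fin n) k) :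
    MvPolynomial (Fin n) k :=
  monomial (lcmMon (pLT μ g₁) (pLT μ g₂) - pLT μ g₁) (pLC μ g₁)⁻¹

/-- The S-polynomial of `g₁` and `g₂`. -/
noncomputable def Spol (μ : AdmissibleOrder n) (g₁ g₂ : MvPolynomial (Fin n) k) :
    MvPolynomial (Fin n) k :=
  uterm μ g₁ g₂ * g₁ - uterm μ g₂ g₁ * g₂

/-- `(g₁, g₂)` is a normal pair. -/
noncomputable def NormalPair [NeZero m] (μ : AdmissibleOrder n) (μ' : ModuleOrder n m)
    (F : Fin m → MvPolynomial (Fin n) k) (g₁ g₂ : MvPolynomial (Fin n) k) : Prop :=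
  PrimSIrr μ μ' F g₁ ∧ PrimSIrr μ μ' F g₂ ∧
  sig μ' F (uterm μ g₁ g₂ * g₁) =
    mact (lcmMon (pLT μ g₁) (pLT μ g₂) - pLT μ g₁) (sig μ' F g₁) ∧
  sig μ' F (uterm μ g₂ g₁ * g₂) =
    mact (lcmMon (pLT μ g₂) (pLT μ g₁) - pLT μ g₂) (sig μ' F g₂) ∧
  sig μ' F (uterm μ g₁ g₂ * g₁) ≠ sig μ' F (uterm μ g₂ g₁ * g₂)


end
end F5

open F5 MvPolynomial
section Aux

open F5 MvPolynomial
open scoped Classical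

/-! ### Helper lemmas for explicit linear orders -/

namespace LO

variable {β : Type*} (r : LinearOrder β) {a b c : β}

lemma le_of_lt (h : r.lt a b) : r.le a b := @_root_.le_of_lt _ r.toPreorder _ _ h
lemma le_refl (a : β) : r.le a a := @_root_.le_refl _ r.toPreorder a
lemma le_trans (h1 : r.le a b) (h2 : r.le b c) : r.le a c :=
  @_root_.le_trans _ r.toPreorder _ _ _ h1 h2
lemma lt_of_le_of_lt (h1 : r.le a b) (h2 : r.lt b c) : r.lt a c :=
  @_root_.lt_of_le_of_lt _ r.toPreorder _ _ _ h1 h2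
lemma lt_of_le_of_ne (h1 : r.le a b) (h2 : a ≠ b) : r.lt a b :=
  @_root_.lt_of_le_of_ne _ r.toPartialOrder _ _ h1 h2
lemma le_antisymm (h1 : r.le a b) (h2 : r.le b a) : a = b :=
  @_root_.le_antisymm _ r.toPartialOrder _ _ h1 h2
lemma not_lt_iff : ¬ r.lt a b ↔ r.le b a := @_root_.not_lt _ r _ _
lemma max_eq_left (h : r.le b a) : r.max a b = a := @_root_.max_eq_left _ r _ _ h
lemma max_eq_right (h : r.le a b) : r.max a b = b := @_root_.max_eq_right _ r _ _ h
lemma le_max_left (a b : β) : r.le a (r.max a b) := @_root_.le_max_left _ r a b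
lemma le_max_right (a b : β) : r.le b (r.max a b) := @_root_.le_max_right _ r a b
lemma le_max_iff : r.le a (r.max b c) ↔ r.le a b ∨ r.le a c := @_root_.le_max_iff _ r _ _ _
lemma max_lt (h1 : r.lt a c) (h2 : r.lt b c) : r.lt (r.max a b) c :=
  @_root_.max_lt _ r _ _ _ h1 h2
lemma lt_trichotomy (a b : β) : r.lt a b ∨ a = b ∨ r.lt b a := @_root_.lt_trichotomy _ r a b
lemma lt_irrefl (a : β) : ¬ r.lt a a := @_root_.lt_irrefl _ r.toPreorder a

end LO

set_option linter.unusedSectionVars false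

variable {k : Type*} [Field k] {n m : ℕ} [NeZero m]

/-! ### Monomial (exponent vector) arithmetic -/

lemma lcmMon_apply (s t : Mon n) (x : Fin n) : lcmMon s t x = max (s x) (t x) := by
  simp only [lcmMon, Finsupp.add_apply, Finsupp.tsub_apply]
  omega

lemma lcmMon_comm (s t : Mon n) : lcmMon s t = lcmMon t s := by
  ext x; simp only [lcmMon_apply]; omega

lemma lcm_sub_add (s t : Mon n) : (lcmMon s t - s) + s = lcmMon s t := by
  ext x
  simp only [Finsupp.add_apply, Finsupp.tsub_apply, lcmMon_apply]
  omega

lemma lcm_eq_of_sub_eq_zero {s t : Mon n} (h : lcmMon s t - s = 0) : lcmMon s t = s := by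
  ext x
  have hx := DFunLike.congr_fun h x
  simp only [Finsupp.tsub_apply, lcmMon_apply, Finsupp.coe_zero, Pi.zero_apply] at hx ⊢
  omega

/-! ### Leading term lemmas -/

variable (μ : AdmissibleOrder n)

lemma pLT_mem_support {f : MvPolynomial (Fin n) k} (hf : f ≠ 0) : pLT μ f ∈ f.support := by
  rw [pLT, dif_pos (support_nonempty.2 hf)]
  exact @Finset.max'_mem _ μ.ord _ _

lemma le_pLT {f : MvPolynomial (Fin n) k} {s : Mon n} (hs : s ∈ f.support) :
    μ.ord.le s (pLT μ f) := by
  have hf : f.support.Nonempty := ⟨s, hs⟩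
  rw [pLT, dif_pos hf]
  exact @Finset.le_max' _ μ.ord _ _ hs

lemma pLC_ne_zero {f : MvPolynomial (Fin n) k} (hf : f ≠ 0) : pLC μ f ≠ 0 := by
  have := pLT_mem_support μ hf
  rw [mem_support_iff] at this
  exact this

lemma mon_le_add_left {s t : Mon n} (u : Mon n) (h : μ.ord.le s t) :
    μ.ord.le (u + s) (u + t) := by
  rcases eq_or_ne s t with rfl | hne
  · exact LO.le_refl μ.ord _
  · exact LO.le_of_lt μ.ord (μ.mul_lt_mul s t u (LO.lt_of_le_of_ne μ.ord h hne))

lemma support_mon_mul {t : Mon n} {c : k} (hc : c ≠ 0) (f : MvPolynomial (Fin n) k) :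
    (monomial t c * f).support = f.support.map (addLeftEmbedding t) :=
  AddMonoidAlgebra.support_coeff_single_mul f c (fun y => by simp [hc]) t

lemma mem_support_mon_mul {t : Mon n} {c : k} (hc : c ≠ 0) {f : MvPolynomial (Fin n) k}
    {s : Mon n} (hs : s ∈ (monomial t c * f).support) :
    ∃ s' ∈ f.support, s = t + s' := by
  rw [support_mon_mul hc] at hs
  obtain ⟨s', hs', rfl⟩ := Finset.mem_map.1 hs
  exact ⟨s', hs', rfl⟩

lemma pLT_mon_mul {t : Mon n} {c : k} (hc : c ≠ 0) {f : MvPolynomial (Fin n) k} (hf : f ≠ 0) :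
    pLT μ (monomial t c * f) = t + pLT μ f := by
  have hg : monomial t c * f ≠ 0 :=
    mul_ne_zero (fun h => hc (monomial_eq_zero.1 h)) hf
  have hmem : t + pLT μ f ∈ (monomial t c * f).support := by
    rw [mem_support_iff, coeff_monomial_mul]
    exact mul_ne_zero hc (pLC_ne_zero μ hf)
  refine LO.le_antisymm μ.ord ?_ (le_pLT μ hmem)
  obtain ⟨s', hs', heq⟩ := mem_support_mon_mul hc (pLT_mem_support μ hg)
  rw [heq]
  exact mon_le_add_left μ t (le_pLT μ hs')

/-! ### Module support and leading module term -/

variable (μ' : ModuleOrder n m)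

lemma mem_msupport {u : Fin m → MvPolynomial (Fin n) k} {σ : MTerm n m} :
    σ ∈ msupport u ↔ σ.1 ∈ (u σ.2).support := by
  obtain ⟨t, l⟩ := σ
  simp only [msupport, Finset.mem_biUnion, Finset.mem_univ, true_and, Finset.mem_image,
    Prod.mk.injEq]
  constructor
  · rintro ⟨l', t', ht', rfl, rfl⟩; exact ht'
  · intro h; exact ⟨l, t, h, rfl, rfl⟩

lemma msupport_nonempty_iff {u : Fin m → MvPolynomial (Fin n) k} :
    (msupport u).Nonempty ↔ u ≠ 0 := by
  constructor
  · rintro ⟨σ, hσ⟩ rfl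
    rw [mem_msupport] at hσ
    simp at hσ
  · intro hu
    obtain ⟨l, hl⟩ := Function.ne_iff.1 hu
    obtain ⟨t, ht⟩ := support_nonempty.2 hl
    exact ⟨(t, l), mem_msupport.2 ht⟩

lemma mLT_mem {u : Fin m → MvPolynomial (Fin n) k} (hu : u ≠ 0) :
    mLT μ' u ∈ msupport u := by
  rw [mLT, dif_pos (msupport_nonempty_iff.2 hu)]
  exact @Finset.max'_mem _ μ'.ord _ _

lemma le_mLT {u : Fin m → MvPolynomial (Fin n) k} {σ : MTerm n m} (hσ : σ ∈ msupport u) :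
    μ'.ord.le σ (mLT μ' u) := by
  have hu : (msupport u).Nonempty := ⟨σ, hσ⟩
  rw [mLT, dif_pos hu]
  exact @Finset.le_max' _ μ'.ord _ _ hσ

lemma msupport_smul {c : k} (hc : c ≠ 0) (u : Fin m → MvPolynomial (Fin n) k) :
    msupport (c • u) = msupport u := by
  ext σ
  rw [mem_msupport, mem_msupport]
  have : (c • u) σ.2 = c • (u σ.2) := rfl
  rw [this, MvPolynomial.support_smul_eq hc]

lemma mLT_smul {c : k} (hc : c ≠ 0) (u : Fin m → MvPolynomial (Fin n) k) :
    mLT μ' (c • u) = mLT μ' u := by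
  unfold mLT
  rw [msupport_smul hc]

lemma mLT_sub_le {u w : Fin m → MvPolynomial (Fin n) k} (hu : u ≠ 0) (hw : w ≠ 0)
    (huw : u - w ≠ 0) :
    μ'.ord.le (mLT μ' (u - w)) (μ'.ord.max (mLT μ' u) (mLT μ' w)) := by
  have hmem := mLT_mem μ' huw
  rw [mem_msupport] at hmem
  have heq : (u - w) (mLT μ' (u - w)).2 = u (mLT μ' (u - w)).2 - w (mLT μ' (u - w)).2 := rfl
  rw [heq] at hmem
  have hmem' := MvPolynomial.support_sub _ _ _ hmem
  rw [Finset.mem_union] at hmem'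
  rcases hmem' with h | h
  · exact LO.le_trans μ'.ord (le_mLT μ' (mem_msupport.2 h)) (LO.le_max_left μ'.ord _ _)
  · exact LO.le_trans μ'.ord (le_mLT μ' (mem_msupport.2 h)) (LO.le_max_right μ'.ord _ _)

/-! ### vmap lemmas -/

variable (F : Fin m → MvPolynomial (Fin n) k)

lemma vmap_zero : vmap F (0 : Fin m → MvPolynomial (Fin n) k) = 0 := by
  simp [vmap]

lemma vmap_sub (u w : Fin m → MvPolynomial (Fin n) k) :
    vmap F (u - w) = vmap F u - vmap F w := by
  simp [vmap, Pi.sub_apply, sub_mul, Finset.sum_sub_distrib]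

lemma vmap_smul (c : k) (u : Fin m → MvPolynomial (Fin n) k) :
    vmap F (c • u) = c • vmap F u := by
  simp [vmap, Finset.smul_sum, smul_mul_assoc]

/-! ### Signature lemmas -/

def Sset (f : MvPolynomial (Fin n) k) : Set (MTerm n m) :=
  {σ : MTerm n m | ∃ u : Fin m → MvPolynomial (Fin n) k, u ≠ 0 ∧ vmap F u = f ∧ mLT μ' u = σ}

lemma sig_eq (f : MvPolynomial (Fin n) k) :
    sig μ' F f = if hne : (Sset μ' F f).Nonempty then μ'.wf.min _ hne else mdefault := rfl

lemma Sset_nonempty {f : MvPolynomial (Fin n) k} (hf : f ∈ idealI F) (hf0 : f ≠ 0) :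
    (Sset μ' F f).Nonempty := by
  obtain ⟨c, hc⟩ := (Submodule.mem_span_range_iff_exists_fun _).1 hf
  refine ⟨mLT μ' c, c, ?_, ?_, rfl⟩
  · rintro rfl
    apply hf0
    rw [← hc]
    simp
  · rw [vmap]
    simpa [smul_eq_mul] using hc

lemma sig_le_rep {f : MvPolynomial (Fin n) k} {u : Fin m → MvPolynomial (Fin n) k}
    (hu : u ≠ 0) (hv : vmap F u = f) :
    μ'.ord.le (sig μ' F f) (mLT μ' u) := by
  have hσ : mLT μ' u ∈ Sset μ' F f := ⟨u, hu, hv, rfl⟩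
  have hne : (Sset μ' F f).Nonempty := ⟨_, hσ⟩
  rw [sig_eq, dif_pos hne]
  exact (LO.not_lt_iff μ'.ord).1 (μ'.wf.not_lt_min _ hσ)

lemma exists_rep {f : MvPolynomial (Fin n) k} (hf : f ∈ idealI F) (hf0 : f ≠ 0) :
    ∃ u : Fin m → MvPolynomial (Fin n) k, u ≠ 0 ∧ vmap F u = f ∧ mLT μ' u = sig μ' F f := by
  have hne := Sset_nonempty μ' F hf hf0
  have hmem := μ'.wf.min_mem _ hne
  rw [sig_eq, dif_pos hne]
  exact hmem

lemma Sset_smul {c : k} (hc : c ≠ 0) (f : MvPolynomial (Fin n) k) :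
    Sset μ' F (c • f) = Sset μ' F f := by
  ext σ
  constructor
  · rintro ⟨u, hu, hv, rfl⟩
    refine ⟨c⁻¹ • u, smul_ne_zero (inv_ne_zero hc) hu, ?_, mLT_smul μ' (inv_ne_zero hc) u⟩
    rw [vmap_smul, hv, smul_smul, inv_mul_cancel₀ hc, one_smul]
  · rintro ⟨u, hu, hv, rfl⟩
    refine ⟨c • u, smul_ne_zero hc hu, ?_, mLT_smul μ' hc u⟩
    rw [vmap_smul, hv]

lemma sig_smul {c : k} (hc : c ≠ 0) (f : MvPolynomial (Fin n) k) :
    sig μ' F (c • f) = sig μ' F f := by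
  simp only [sig_eq, Sset_smul μ' F hc]

lemma sig_neg (f : MvPolynomial (Fin n) k) : sig μ' F (-f) = sig μ' F f := by
  have h : -f = (-1 : k) • f := by simp
  rw [h, sig_smul μ' F (by norm_num)]

lemma sig_sub_le {f g : MvPolynomial (Fin n) k} (hf : f ∈ idealI F) (hf0 : f ≠ 0)
    (hg : g ∈ idealI F) (hg0 : g ≠ 0) (hfg : f - g ≠ 0) :
    μ'.ord.le (sig μ' F (f - g)) (μ'.ord.max (sig μ' F f) (sig μ' F g)) := by
  obtain ⟨u, hu, hvu, hLu⟩ := exists_rep μ' F hf hf0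
  obtain ⟨w, hw, hvw, hLw⟩ := exists_rep μ' F hg hg0
  have huw : u - w ≠ 0 := by
    intro h
    apply hfg
    rw [← hvu, ← hvw, ← vmap_sub, h, vmap_zero]
  have h1 := sig_le_rep μ' F huw (by rw [vmap_sub, hvu, hvw])
  have h2 := mLT_sub_le μ' hu hw huw
  rw [hLu, hLw] at h2
  exact LO.le_trans μ'.ord h1 h2

lemma sig_sub_eq {f g : MvPolynomial (Fin n) k} (hf : f ∈ idealI F) (hf0 : f ≠ 0)
    (hg : g ∈ idealI F) (hg0 : g ≠ 0)
    (hlt : μ'.ord.lt (sig μ' F g) (sig μ' F f)) :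
    f - g ≠ 0 ∧ sig μ' F (f - g) = sig μ' F f := by
  have hfg : f - g ≠ 0 := by
    intro h
    rw [sub_eq_zero] at h
    subst h
    exact LO.lt_irrefl μ'.ord _ hlt
  refine ⟨hfg, LO.le_antisymm μ'.ord ?_ ?_⟩
  · have h := sig_sub_le μ' F hf hf0 hg hg0 hfg
    rwa [LO.max_eq_left μ'.ord (LO.le_of_lt μ'.ord hlt)] at h
  · have hfgI : f - g ∈ idealI F := sub_mem hf hg
    have hgnI : -g ∈ idealI F := neg_mem hg
    have h1 : f - g - (-g) = f := by ring
    have h2 := sig_sub_le μ' F hfgI hfg hgnI (neg_ne_zero.2 hg0) (by rw [h1]; exact hf0)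
    rw [h1, sig_neg] at h2
    rcases (LO.le_max_iff μ'.ord).1 h2 with h | h
    · exact h
    · exact absurd hlt ((LO.not_lt_iff μ'.ord).2 h)

/-! ### mact lemmas -/

lemma mact_zero (σ : MTerm n m) : mact (0 : Mon n) σ = σ := by
  simp [mact]

lemma lt_mact {t : Mon n} (ht : t ≠ 0) (σ : MTerm n m) : μ'.ord.lt σ (mact t σ) := by
  refine LO.lt_of_le_of_ne μ'.ord (μ'.le_mul σ t) fun h => ht ?_
  have h1 : σ.1 = t + σ.1 := congrArg Prod.fst h
  ext x
  have hx := DFunLike.congr_fun h1 x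
  simp only [Finsupp.add_apply, Finsupp.coe_zero, Pi.zero_apply] at hx ⊢
  omega

/-! ### The key reduction lemma -/

lemma key3 (a b : MvPolynomial (Fin n) k)
    (haI : a ∈ idealI F) (ha0 : a ≠ 0) (hairr : SIrr μ μ' F a (sig μ' F a))
    (hbI : b ∈ idealI F) (hb0 : b ≠ 0)
    (hs1 : sig μ' F (uterm μ a b * a) =
      mact (lcmMon (pLT μ a) (pLT μ b) - pLT μ a) (sig μ' F a))
    (hlt : μ'.ord.lt (sig μ' F (uterm μ b a * b)) (sig μ' F (uterm μ a b * a))) :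
    lcmMon (pLT μ a) (pLT μ b) - pLT μ a ≠ 0 := by
  intro h0
  have hL : lcmMon (pLT μ a) (pLT μ b) = pLT μ a := lcm_eq_of_sub_eq_zero h0
  have hsa : sig μ' F (uterm μ a b * a) = sig μ' F a := by
    rw [hs1, h0, mact_zero]
  set tb : Mon n := lcmMon (pLT μ b) (pLT μ a) - pLT μ b with htb
  have htbL : tb + pLT μ b = pLT μ a := by
    rw [htb, lcm_sub_add, lcmMon_comm, hL]
  set α : k := pLC μ a * (pLC μ b)⁻¹ with hα_def
  have hα : α ≠ 0 := mul_ne_zero (pLC_ne_zero μ ha0) (inv_ne_zero (pLC_ne_zero μ hb0))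
  set g : MvPolynomial (Fin n) k := a - monomial tb α * b with hg_def
  have hcLb : coeff (pLT μ a) (monomial tb α * b) = α * pLC μ b := by
    rw [← htbL, coeff_monomial_mul]
    rfl
  have hgL : coeff (pLT μ a) g = 0 := by
    rw [hg_def, coeff_sub, hcLb, hα_def, inv_mul_cancel_right₀ (pLC_ne_zero μ hb0)]
    exact sub_self _
  have hsup : ∀ s ∈ g.support, μ.ord.lt s (pLT μ a) := by
    intro s hs
    have hsne : s ≠ pLT μ a := by
      intro h
      rw [mem_support_iff, h, hgL] at hs
      exact hs rfl
    have hs' := MvPolynomial.support_sub _ _ _ hs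
    rw [Finset.mem_union] at hs'
    rcases hs' with h | h
    · exact LO.lt_of_le_of_ne μ.ord (le_pLT μ h) hsne
    · obtain ⟨s', hs'', rfl⟩ := mem_support_mon_mul hα h
      refine LO.lt_of_le_of_ne μ.ord ?_ hsne
      rw [← htbL]
      exact mon_le_add_left μ tb (le_pLT μ hs'')
  rcases hairr with h | h
  · exact ha0 h
  · apply h
    refine ⟨b, hbI, hb0, g, tb, α, hα, hg_def, ?_, ?_⟩
    · by_cases hg : g = 0
      · exact Or.inl hg
      · exact Or.inr (hsup _ (pLT_mem_support μ hg))
    · have h1 : monomial tb (1 : k) * b = (pLC μ b) • (uterm μ b a * b) := by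
        rw [uterm, smul_eq_C_mul, ← mul_assoc, C_mul_monomial,
          mul_inv_cancel₀ (pLC_ne_zero μ hb0)]
      rw [h1, sig_smul μ' F (pLC_ne_zero μ hb0)]
      rw [hsa] at hlt
      exact hlt

end Aux

/-- for a normal pair `(g₁, g₂)`: `Spol(g₁,g₂) ≠ 0`,
`S(Spol(g₁,g₂)) = max(S(u₁g₁), S(u₂g₂))`, if `S(u₁g₁) > S(u₂g₂)` then `LT(u₁) ≠ 1`,
and `S(Spol(g₁,g₂)) > max(S(g₁), S(g₂))`. -/
theorem stmt_13 {k : Type*} [Field k] {n m : ℕ} [NeZero m]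
    (μ : AdmissibleOrder n) (μ' : ModuleOrder n m)
    (F : Fin m → MvPolynomial (Fin n) k)
    (g₁ g₂ : MvPolynomial (Fin n) k)
    (hNP : NormalPair μ μ' F g₁ g₂) :
    Spol μ g₁ g₂ ≠ 0 ∧
    sig μ' F (Spol μ g₁ g₂) =
      μ'.ord.max (sig μ' F (uterm μ g₁ g₂ * g₁)) (sig μ' F (uterm μ g₂ g₁ * g₂)) ∧
    (μ'.ord.lt (sig μ' F (uterm μ g₂ g₁ * g₂)) (sig μ' F (uterm μ g₁ g₂ * g₁)) →
      lcmMon (pLT μ g₁) (pLT μ g₂) - pLT μ g₁ ≠ 0) ∧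
    μ'.ord.lt (μ'.ord.max (sig μ' F g₁) (sig μ' F g₂)) (sig μ' F (Spol μ g₁ g₂)) := by
  obtain ⟨hP1, hP2, hs1, hs2, hne⟩ := hNP
  obtain ⟨h1I, h10, h1irr, -⟩ := hP1
  obtain ⟨h2I, h20, h2irr, -⟩ := hP2
  have hAI : uterm μ g₁ g₂ * g₁ ∈ idealI F := Ideal.mul_mem_left _ _ h1I
  have hBI : uterm μ g₂ g₁ * g₂ ∈ idealI F := Ideal.mul_mem_left _ _ h2I
  have hu1 : uterm μ g₁ g₂ ≠ 0 := fun h =>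
    inv_ne_zero (pLC_ne_zero μ h10) (monomial_eq_zero.1 h)
  have hu2 : uterm μ g₂ g₁ ≠ 0 := fun h =>
    inv_ne_zero (pLC_ne_zero μ h20) (monomial_eq_zero.1 h)
  have hA0 : uterm μ g₁ g₂ * g₁ ≠ 0 := mul_ne_zero hu1 h10
  have hB0 : uterm μ g₂ g₁ * g₂ ≠ 0 := mul_ne_zero hu2 h20
  have hSpol : Spol μ g₁ g₂ = uterm μ g₁ g₂ * g₁ - uterm μ g₂ g₁ * g₂ := rfl
  rcases LO.lt_trichotomy μ'.ord (sig μ' F (uterm μ g₂ g₁ * g₂))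
      (sig μ' F (uterm μ g₁ g₂ * g₁)) with hlt | heq | hlt
  · obtain ⟨hne0, hsig⟩ := sig_sub_eq μ' F hAI hA0 hBI hB0 hlt
    have ht1 : lcmMon (pLT μ g₁) (pLT μ g₂) - pLT μ g₁ ≠ 0 :=
      key3 μ μ' F g₁ g₂ h1I h10 h1irr h2I h20 hs1 hlt
    refine ⟨by rw [hSpol]; exact hne0, ?_, fun _ => ht1, ?_⟩
    · rw [hSpol, hsig]
      exact (LO.max_eq_left μ'.ord (LO.le_of_lt μ'.ord hlt)).symm
    · rw [hSpol, hsig, hs1]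
      refine LO.max_lt μ'.ord ?_ ?_
      · exact lt_mact μ' ht1 _
      · have hb : μ'.ord.le (sig μ' F g₂) (sig μ' F (uterm μ g₂ g₁ * g₂)) := by
          rw [hs2]; exact μ'.le_mul _ _
        have h := LO.lt_of_le_of_lt μ'.ord hb hlt
        rwa [hs1] at h
  · exact absurd heq.symm hne
  · obtain ⟨hne0, hsig⟩ := sig_sub_eq μ' F hBI hB0 hAI hA0 hlt
    have ht2 : lcmMon (pLT μ g₂) (pLT μ g₁) - pLT μ g₂ ≠ 0 :=
      key3 μ μ' F g₂ g₁ h2I h20 h2irr h1I h10 hs2 hlt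
    have hSpol' : Spol μ g₁ g₂ = -(uterm μ g₂ g₁ * g₂ - uterm μ g₁ g₂ * g₁) := by
      rw [hSpol]; ring
    have hsigS : sig μ' F (Spol μ g₁ g₂) =
        sig μ' F (uterm μ g₂ g₁ * g₂ - uterm μ g₁ g₂ * g₁) := by
      rw [hSpol', sig_neg]
    refine ⟨?_, ?_, ?_, ?_⟩
    · rw [hSpol']
      exact neg_ne_zero.2 hne0
    · rw [hsigS, hsig]
      exact (LO.max_eq_right μ'.ord (LO.le_of_lt μ'.ord hlt)).symm
    · intro hcon
      exact absurd hcon ((LO.not_lt_iff μ'.ord).2 (LO.le_of_lt μ'.ord hlt))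
    · rw [hsigS, hsig, hs2]
      refine LO.max_lt μ'.ord ?_ ?_
      · have hb : μ'.ord.le (sig μ' F g₁) (sig μ' F (uterm μ g₁ g₂ * g₁)) := by
          rw [hs1]; exact μ'.le_mul _ _
        have h := LO.lt_of_le_of_lt μ'.ord hb hlt
        rwa [hs2] at h
      · exact lt_mact μ' ht2 _
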